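/- Let r ≥ 1, let k ≥ 0 be an integer, and let φ : ℂʳ → ℂ be a continuous function that is positively homogeneous of degree k, i.e. φ(t·z) = tᵏ·φ(z) for all t > 0 and z ∈ ℂʳ. Then ∫_{ℂʳ} |φ(z)|² e^{−‖z‖²} dλ(z) = (k+r)! · ∫_{ℂʳ} |φ(z)|² (1 + ‖z‖²)^{−(k+r+1)} dλ(z), where λ is Lebesgue measure on ℂʳ ≅ ℝ^{2r} and ‖z‖² = Σ_{j=1}^r |z_j|² (both integrals being finite). -/

import Mathlib

open MeasureTheory Set Real ENNReal

set_option maxHeartbeats 1000000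








lemma gauss_c : Integrable (fun x : ℂ => Real.exp (-(1/2) * ‖x‖^2)) := by
  have h := Complex.volume_preserving_equiv_real_prod.symm
  rw [← h.integrable_comp_emb (Complex.measurableEquivRealProd.symm.measurableEmbedding)]
  have : ((fun x : ℂ => Real.exp (-(1/2) * ‖x‖^2)) ∘ Complex.measurableEquivRealProd.symm)
      = fun p : ℝ × ℝ => Real.exp (-(1/2) * p.1^2) * Real.exp (-(1/2) * p.2^2) := by
    ext p
    simp only [Function.comp_apply, Complex.measurableEquivRealProd_symm_apply,
      ← Real.exp_add, Complex.sq_norm, Complex.normSq_mk]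
    ring_nf
  rw [this]
  exact (integrable_exp_neg_mul_sq (by norm_num : (0:ℝ) < 1/2)).mul_prod
    (integrable_exp_neg_mul_sq (by norm_num : (0:ℝ) < 1/2))

lemma aux_bound (r k : ℕ) (φ : (Fin r → ℂ) → ℂ) (hcont : Continuous φ)
    (hhom : ∀ t : ℝ, 0 < t → ∀ z : Fin r → ℂ, φ (t • z) = (t:ℂ)^k * φ z) :
    ∃ C : ℝ, 0 ≤ C ∧ ∀ z : Fin r → ℂ, ‖φ z‖^2 ≤ C * (∑ j, ‖z j‖^2)^k := by
  obtain ⟨w, -, hw⟩ := (isCompact_closedBall (0:(Fin r → ℂ)) 1).exists_isMaxOn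
    ⟨0, Metric.mem_closedBall_self zero_le_one⟩ ((hcont.norm.pow 2).continuousOn)
  refine ⟨‖φ w‖^2, by positivity, fun z => ?_⟩
  by_cases hz : z = 0
  · subst hz
    cases k with
    | zero => simpa using hw (Metric.mem_closedBall_self (zero_le_one (α := ℝ)))
    | succ m =>
      have h2 := hhom 2 two_pos 0
      rw [smul_zero] at h2
      have hφ0 : φ 0 = 0 := by
        have hn := congrArg norm h2
        rw [norm_mul, norm_pow, Complex.norm_real, Real.norm_eq_abs] at hn
        have habs : |(2:ℝ)| = 2 := by norm_num
        rw [habs] at hn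
        have h2k : (2:ℝ) ≤ 2^(m+1) := by
          calc (2:ℝ) = 2^1 := (pow_one 2).symm
          _ ≤ 2^(m+1) := pow_le_pow_right₀ one_le_two (by omega)
        have hnn : (0:ℝ) ≤ ‖φ 0‖ := norm_nonneg _
        have : ‖φ 0‖ = 0 := by nlinarith
        exact norm_eq_zero.mp this
      simp [hφ0]
  · have hSpos : 0 < ∑ j, ‖z j‖^2 := by
      obtain ⟨j, hj⟩ : ∃ j, z j ≠ 0 := by
        by_contra h; push_neg at h; exact hz (funext h)
      exact Finset.sum_pos' (fun i _ => by positivity)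
        ⟨j, Finset.mem_univ j, pow_pos (norm_pos_iff.mpr hj) 2⟩
    set t := Real.sqrt (∑ j, ‖z j‖^2) with ht
    have htpos : 0 < t := Real.sqrt_pos.mpr hSpos
    have hzz : φ z = (t:ℂ)^k * φ (t⁻¹ • z) := by
      have h := hhom t htpos (t⁻¹ • z)
      rwa [smul_smul, mul_inv_cancel₀ htpos.ne', one_smul] at h
    have hmem : t⁻¹ • z ∈ Metric.closedBall (0:(Fin r→ℂ)) 1 := by
      rw [Metric.mem_closedBall, dist_zero_right]
      refine (pi_norm_le_iff_of_nonneg zero_le_one).mpr fun j => ?_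
      rw [Pi.smul_apply, norm_smul, norm_inv, Real.norm_eq_abs, abs_of_pos htpos]
      rw [inv_mul_le_iff₀ htpos, mul_one]
      have hle : ‖z j‖^2 ≤ ∑ i, ‖z i‖^2 :=
        Finset.single_le_sum (f := fun i => ‖z i‖^2) (fun i _ => sq_nonneg _)
          (Finset.mem_univ j)
      calc ‖z j‖ = Real.sqrt (‖z j‖^2) := (Real.sqrt_sq (norm_nonneg _)).symm
        _ ≤ t := Real.sqrt_le_sqrt hle
    calc ‖φ z‖^2 = (∑ j, ‖z j‖^2)^k * ‖φ (t⁻¹ • z)‖^2 := by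
          rw [hzz, norm_mul, mul_pow, norm_pow, Complex.norm_real, Real.norm_eq_abs,
            abs_of_pos htpos, ← pow_mul, mul_comm k 2, pow_mul, Real.sq_sqrt hSpos.le]
      _ ≤ (∑ j, ‖z j‖^2)^k * ‖φ w‖^2 := by
          exact mul_le_mul_of_nonneg_left (hw hmem) (by positivity)
      _ = ‖φ w‖^2 * (∑ j, ‖z j‖^2)^k := mul_comm _ _

lemma pow_le_exp_aux (k : ℕ) (x : ℝ) (hx : 0 ≤ x) :
    x ^ k ≤ (2*k+1:ℝ)^k * Real.exp ((1/2) * x) := by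
  have h2k1 : (0:ℝ) < 2*k+1 := by positivity
  have h1 : x / (2*k+1) ≤ Real.exp (x / (2*k+1)) := by
    have := Real.add_one_le_exp (x / (2*k+1)); linarith
  have h2 : (x / (2*k+1))^k ≤ Real.exp (x/(2*k+1))^k :=
    pow_le_pow_left₀ (by positivity) h1 k
  have h3 : Real.exp (x/(2*k+1))^k = Real.exp (k * (x/(2*k+1))) :=
    (Real.exp_nat_mul _ k).symm
  have h4 : (k:ℝ) * (x/(2*k+1)) ≤ (1/2) * x := by
    rw [mul_div_assoc']
    rw [div_le_iff₀ h2k1]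
    nlinarith [Nat.cast_nonneg (α := ℝ) k]
  calc x ^ k = ((2*k+1:ℝ) * (x / (2*k+1)))^k := by rw [mul_div_cancel₀ _ h2k1.ne']
    _ = (2*k+1:ℝ)^k * (x / (2*k+1))^k := mul_pow _ _ _
    _ ≤ (2*k+1:ℝ)^k * Real.exp ((1/2) * x) := by
        refine mul_le_mul_of_nonneg_left ?_ (by positivity)
        exact h2.trans (by rw [h3]; exact Real.exp_le_exp.mpr h4)

lemma continuous_S (r : ℕ) : Continuous (fun z : Fin r → ℂ => ∑ j, ‖z j‖^2) :=
  continuous_finset_sum _ fun j _ => ((continuous_apply j).norm.pow 2)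

lemma aux_int (r k : ℕ) (φ : (Fin r → ℂ) → ℂ) (hcont : Continuous φ)
    (hhom : ∀ t : ℝ, 0 < t → ∀ z : Fin r → ℂ, φ (t • z) = (t:ℂ)^k * φ z) :
    Integrable (fun z : Fin r → ℂ => ‖φ z‖ ^ 2 * Real.exp (-(∑ j, ‖z j‖ ^ 2))) := by
  obtain ⟨C, hC0, hC⟩ := aux_bound r k φ hcont hhom
  have hprod : Integrable (fun z : Fin r → ℂ => ∏ j, Real.exp (-(1/2) * ‖z j‖^2)) :=
    Integrable.fintype_prod (f := fun (_ : Fin r) (x : ℂ) => Real.exp (-(1/2) * ‖x‖^2))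
      (fun _ => gauss_c)
  have hexp : ∀ z : Fin r → ℂ, Real.exp (-(1/2) * ∑ j, ‖z j‖^2)
      = ∏ j, Real.exp (-(1/2) * ‖z j‖^2) := fun z => by
    rw [← Real.exp_sum, Finset.mul_sum]
  have hbd : Integrable (fun z : Fin r → ℂ =>
      (C * (2*k+1:ℝ)^k) * Real.exp (-(1/2) * ∑ j, ‖z j‖^2)) := by
    simp only [hexp]; exact hprod.const_mul _
  refine hbd.mono' ?_ ?_
  · exact ((hcont.norm.pow 2).mul (((continuous_S r).neg).rexp)).aestronglyMeasurable
  · refine Filter.Eventually.of_forall fun z => ?_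
    have hS0 : 0 ≤ ∑ j, ‖z j‖^2 := Finset.sum_nonneg fun i _ => sq_nonneg _
    rw [Real.norm_eq_abs, abs_of_nonneg (by positivity)]
    have step1 : ‖φ z‖^2 * Real.exp (-(∑ j, ‖z j‖^2)) ≤
        C * ((∑ j, ‖z j‖^2)^k * Real.exp (-(∑ j, ‖z j‖^2))) := by
      rw [← mul_assoc]
      exact mul_le_mul_of_nonneg_right (hC z) (Real.exp_nonneg _)
    have step2 : (∑ j, ‖z j‖^2)^k * Real.exp (-(∑ j, ‖z j‖^2)) ≤
        (2*k+1:ℝ)^k * Real.exp (-(1/2) * ∑ j, ‖z j‖^2) := by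
      have := pow_le_exp_aux k _ hS0
      have hh : Real.exp (-(∑ j, ‖z j‖^2)) =
          Real.exp ((1/2) * ∑ j, ‖z j‖^2) * Real.exp (-(1/2) * ∑ j, ‖z j‖^2) *
            Real.exp (-(∑ j, ‖z j‖^2)) * Real.exp ((1/2) * ∑ j, ‖z j‖^2) *
            Real.exp (-(1/2) * ∑ j, ‖z j‖^2) := by
        rw [← Real.exp_add, ← Real.exp_add, ← Real.exp_add, ← Real.exp_add]; ring_nf
      calc (∑ j, ‖z j‖^2)^k * Real.exp (-(∑ j, ‖z j‖^2))
          = ((∑ j, ‖z j‖^2)^k * Real.exp (-(1/2) * ∑ j, ‖z j‖^2)) *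
            Real.exp (-(1/2) * ∑ j, ‖z j‖^2) := by
            rw [mul_assoc, ← Real.exp_add]; ring_nf
        _ ≤ ((2*k+1:ℝ)^k * Real.exp ((1/2) * ∑ j, ‖z j‖^2) *
              Real.exp (-(1/2) * ∑ j, ‖z j‖^2)) * Real.exp (-(1/2) * ∑ j, ‖z j‖^2) := by
            refine mul_le_mul_of_nonneg_right ?_ (Real.exp_nonneg _)
            exact mul_le_mul_of_nonneg_right this (Real.exp_nonneg _)
        _ = (2*k+1:ℝ)^k * Real.exp (-(1/2) * ∑ j, ‖z j‖^2) := by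
            rw [mul_assoc, mul_assoc, ← Real.exp_add, ← Real.exp_add]; ring_nf
    calc ‖φ z‖^2 * Real.exp (-(∑ j, ‖z j‖^2))
        ≤ C * ((∑ j, ‖z j‖^2)^k * Real.exp (-(∑ j, ‖z j‖^2))) := step1
      _ ≤ C * ((2*k+1:ℝ)^k * Real.exp (-(1/2) * ∑ j, ‖z j‖^2)) :=
          mul_le_mul_of_nonneg_left step2 hC0
      _ = (C * (2*k+1:ℝ)^k) * Real.exp (-(1/2) * ∑ j, ‖z j‖^2) := by ring

lemma finrank_pi_complex (r : ℕ) : Module.finrank ℝ (Fin r → ℂ) = 2 * r := by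
  simp [Module.finrank_pi_fintype, Complex.finrank_real_complex, mul_comm]

lemma aux_scale (r k : ℕ) (φ : (Fin r → ℂ) → ℂ) (hcont : Continuous φ)
    (hhom : ∀ t : ℝ, 0 < t → ∀ z : Fin r → ℂ, φ (t • z) = (t:ℂ)^k * φ z)
    (t : ℝ) (ht : 0 < t) :
    ∫⁻ z : Fin r → ℂ, ENNReal.ofReal (‖φ z‖^2 * Real.exp (-(t * ∑ j, ‖z j‖^2))) =
      (ENNReal.ofReal (t ^ (k + r)))⁻¹ *
        ∫⁻ z : Fin r → ℂ, ENNReal.ofReal (‖φ z‖^2 * Real.exp (-(∑ j, ‖z j‖^2))) := by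
  set s := Real.sqrt t with hs_def
  have hs : 0 < s := Real.sqrt_pos.mpr ht
  have hs2 : s^2 = t := Real.sq_sqrt ht.le
  set F : (Fin r → ℂ) → ℝ≥0∞ :=
    fun z => ENNReal.ofReal (‖φ z‖^2 * Real.exp (-(t * ∑ j, ‖z j‖^2))) with hF_def
  have hScont : Continuous (fun z : Fin r → ℂ => ∑ j, ‖z j‖^2) :=
    continuous_finset_sum _ fun j _ => ((continuous_apply j).norm.pow 2)
  have hFmeas : Measurable F :=
    ENNReal.measurable_ofReal.comp
      (((hcont.norm.pow 2).mul ((hScont.const_smul t).neg.rexp)).measurable)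
  have hmap := Measure.map_addHaar_smul (volume : Measure (Fin r → ℂ))
    (inv_ne_zero hs.ne')
  have hsm : Measurable (fun x : Fin r → ℂ => s⁻¹ • x) := measurable_id.const_smul s⁻¹
  have hlm := lintegral_map (μ := (volume : Measure (Fin r → ℂ))) hFmeas hsm
  rw [hmap, lintegral_smul_measure] at hlm
  -- hlm : ofReal |(s⁻¹)^(finrank)|⁻¹ * ∫⁻ F = ∫⁻ z, F (s⁻¹ • z)
  have hptwise : ∀ z : Fin r → ℂ, F (s⁻¹ • z) =
      ENNReal.ofReal ((s^(2*k))⁻¹) *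
        ENNReal.ofReal (‖φ z‖^2 * Real.exp (-(∑ j, ‖z j‖^2))) := by
    intro z
    have hφ : φ (s⁻¹ • z) = ((s⁻¹:ℝ):ℂ)^k * φ z := hhom s⁻¹ (by positivity) z
    have hSz : (∑ j, ‖(s⁻¹ • z) j‖^2) = (s^2)⁻¹ * ∑ j, ‖z j‖^2 := by
      rw [Finset.mul_sum]
      refine Finset.sum_congr rfl fun j _ => ?_
      rw [Pi.smul_apply, norm_smul, Real.norm_eq_abs, abs_of_pos (by positivity : (0:ℝ) < s⁻¹),
        mul_pow, inv_pow]
    rw [hF_def]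
    simp only
    rw [hφ, hSz, norm_mul, norm_pow, Complex.norm_real, Real.norm_eq_abs,
      abs_of_pos (by positivity : (0:ℝ) < s⁻¹), mul_pow, ← pow_mul, hs2]
    rw [show t * ((t)⁻¹ * ∑ j, ‖z j‖^2) = ∑ j, ‖z j‖^2 by
      rw [← mul_assoc, mul_inv_cancel₀ ht.ne', one_mul]]
    rw [mul_assoc, ENNReal.ofReal_mul (by positivity)]
    congr 2
    ring
  set B := ∫⁻ z : Fin r → ℂ, ENNReal.ofReal (‖φ z‖^2 * Real.exp (-(∑ j, ‖z j‖^2))) with hB_def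
  have hBconst : ∫⁻ z : Fin r → ℂ, F (s⁻¹ • z) = ENNReal.ofReal ((s^(2*k))⁻¹) * B := by
    simp only [hptwise]
    exact lintegral_const_mul' _ _ ENNReal.ofReal_ne_top
  rw [hBconst] at hlm
  have hcoef : |(s⁻¹ ^ Module.finrank ℝ (Fin r → ℂ))⁻¹| = s^(2*r) := by
    rw [finrank_pi_complex, inv_pow, inv_inv, abs_of_pos (by positivity)]
  rw [hcoef] at hlm
  have ha0 : ENNReal.ofReal (s^(2*r)) ≠ 0 := by
    rw [ne_eq, ENNReal.ofReal_eq_zero, not_le]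
    positivity
  have haT : ENNReal.ofReal (s^(2*r)) ≠ ⊤ := ENNReal.ofReal_ne_top
  calc ∫⁻ z : Fin r → ℂ, F z
      = (ENNReal.ofReal (s^(2*r)))⁻¹ * (ENNReal.ofReal (s^(2*r)) * ∫⁻ z : Fin r → ℂ, F z) := by
        rw [← mul_assoc, ENNReal.inv_mul_cancel ha0 haT, one_mul]
    _ = (ENNReal.ofReal (s^(2*r)))⁻¹ * (ENNReal.ofReal ((s^(2*k))⁻¹) * B) := by rw [← hlm, smul_eq_mul]
    _ = (ENNReal.ofReal (t^(k+r)))⁻¹ * B := by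
        rw [← ENNReal.ofReal_inv_of_pos (by positivity : (0:ℝ) < s^(2*r)), ← mul_assoc,
          ← ENNReal.ofReal_mul (by positivity),
          ← ENNReal.ofReal_inv_of_pos (by positivity : (0:ℝ) < t^(k+r))]
        congr 2
        rw [← mul_inv]
        congr 1
        rw [← hs2]
        ring

lemma aux_gamma (n : ℕ) (c : ℝ) (hc : 0 < c) :
    ∫⁻ t in Ioi (0:ℝ), ENNReal.ofReal (t^n * Real.exp (-(c * t))) =
      ENNReal.ofReal ((n.factorial : ℝ) * ((c^(n+1))⁻¹)) := by
  have hi0 : IntegrableOn (fun t : ℝ => t^(n:ℝ) * Real.exp (-c * t^(1:ℝ))) (Ioi 0) :=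
    integrableOn_rpow_mul_exp_neg_mul_rpow (neg_one_lt_zero.trans_le (Nat.cast_nonneg n)) one_pos hc
  have heq : ∀ t ∈ Ioi (0:ℝ), t^(n:ℝ) * Real.exp (-c * t^(1:ℝ)) = t^n * Real.exp (-(c * t)) := by
    intro t ht
    rw [Real.rpow_one, Real.rpow_natCast, neg_mul]
  have hi : IntegrableOn (fun t : ℝ => t^n * Real.exp (-(c * t))) (Ioi 0) :=
    hi0.congr_fun heq measurableSet_Ioi
  rw [← ofReal_integral_eq_lintegral_ofReal hi
    ((ae_restrict_iff' measurableSet_Ioi).mpr (Filter.Eventually.of_forall fun t ht => by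
      have h0 : (0:ℝ) < t := ht
      positivity))]
  congr 1
  rw [← setIntegral_congr_fun measurableSet_Ioi heq]
  rw [integral_rpow_mul_exp_neg_mul_rpow one_pos (neg_one_lt_zero.trans_le (Nat.cast_nonneg n)) hc]
  simp only [div_one]
  rw [Real.Gamma_nat_eq_factorial n, Real.rpow_neg hc.le,
    show ((n:ℝ)+1) = ((n+1:ℕ):ℝ) from by push_cast; ring, Real.rpow_natCast]
  ring

lemma exp_lint : ∫⁻ t in Ioi (0:ℝ), ENNReal.ofReal (Real.exp (-t)) = 1 := by
  have hi : IntegrableOn (fun t : ℝ => Real.exp (-t)) (Ioi 0) := by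
    have := exp_neg_integrableOn_Ioi (0:ℝ) (b := 1) one_pos
    simpa using this
  rw [← ofReal_integral_eq_lintegral_ofReal hi
    (Filter.Eventually.of_forall fun t => (Real.exp_nonneg _))]
  rw [integral_exp_neg_Ioi_zero]
  exact ENNReal.ofReal_one
/-- for `φ : ℂʳ → ℂ` continuous and positively homogeneous of degree `k`,
both integrals below are finite and
`∫ |φ(z)|² e^{−‖z‖²} dλ(z) = (k+r)! · ∫ |φ(z)|² (1+‖z‖²)^{−(k+r+1)} dλ(z)`. -/
theorem fock_norm_eq_invariant_norm (r k : ℕ) (hr : 1 ≤ r)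
    (φ : (Fin r → ℂ) → ℂ) (hcont : Continuous φ)
    (hhom : ∀ t : ℝ, 0 < t → ∀ z : Fin r → ℂ, φ (t • z) = (t : ℂ) ^ k * φ z) :
    Integrable (fun z : Fin r → ℂ => ‖φ z‖ ^ 2 * Real.exp (-(∑ j, ‖z j‖ ^ 2))) ∧
    Integrable (fun z : Fin r → ℂ =>
      ‖φ z‖ ^ 2 * ((1 + ∑ j, ‖z j‖ ^ 2) ^ (k + r + 1))⁻¹) ∧
    (∫ z : Fin r → ℂ, ‖φ z‖ ^ 2 * Real.exp (-(∑ j, ‖z j‖ ^ 2))) =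
      (Nat.factorial (k + r)) *
        ∫ z : Fin r → ℂ, ‖φ z‖ ^ 2 * ((1 + ∑ j, ‖z j‖ ^ 2) ^ (k + r + 1))⁻¹ := by
  have hScont : Continuous (fun z : Fin r → ℂ => ∑ j, ‖z j‖^2) :=
    continuous_finset_sum _ fun j _ => ((continuous_apply j).norm.pow 2)
  have hInt1 := aux_int r k φ hcont hhom
  set n := k + r with hn_def
  set B := ∫⁻ z : Fin r → ℂ, ENNReal.ofReal (‖φ z‖^2 * Real.exp (-(∑ j, ‖z j‖^2))) with hB_def
  set J := ∫⁻ z : Fin r → ℂ,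
      ENNReal.ofReal (‖φ z‖^2 * ((1 + ∑ j, ‖z j‖^2)^(n+1))⁻¹) with hJ_def
  have hnn1 : ∀ z : Fin r → ℂ, 0 ≤ ‖φ z‖^2 * Real.exp (-(∑ j, ‖z j‖^2)) :=
    fun z => by positivity
  have hnn2 : ∀ z : Fin r → ℂ, 0 ≤ ‖φ z‖^2 * ((1 + ∑ j, ‖z j‖^2)^(n+1))⁻¹ := by
    intro z
    have h0 : (0:ℝ) ≤ ∑ j, ‖z j‖^2 := Finset.sum_nonneg fun i _ => sq_nonneg _
    positivity
  have hBlt : B < ⊤ :=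
    (hasFiniteIntegral_iff_ofReal (Filter.Eventually.of_forall hnn1)).1 hInt1.2
  have hcont2 : Continuous (fun z : Fin r → ℂ =>
      ‖φ z‖^2 * ((1 + ∑ j, ‖z j‖^2)^(n+1))⁻¹) := by
    refine (hcont.norm.pow 2).mul (Continuous.inv₀ ((continuous_const.add hScont).pow (n+1))
      fun z => ?_)
    have h0 : (0:ℝ) ≤ ∑ j, ‖z j‖^2 := Finset.sum_nonneg fun i _ => sq_nonneg _
    positivity
  set a := ENNReal.ofReal ((n.factorial : ℝ)) with ha_def
  have ha0 : a ≠ 0 := by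
    rw [ha_def, ne_eq, ENNReal.ofReal_eq_zero, not_le]
    exact_mod_cast n.factorial_pos
  have haT : a ≠ ⊤ := ENNReal.ofReal_ne_top
  -- the key computation
  have key : J * a = B := by
    have step1 : J * a = ∫⁻ z : Fin r → ℂ, ENNReal.ofReal (‖φ z‖^2) *
        ∫⁻ t in Ioi (0:ℝ), ENNReal.ofReal (t^n * Real.exp (-((1 + ∑ j, ‖z j‖^2) * t))) := by
      rw [hJ_def, ← lintegral_mul_const' a _ haT]
      refine lintegral_congr fun z => ?_
      have h0 : (0:ℝ) ≤ ∑ j, ‖z j‖^2 := Finset.sum_nonneg fun i _ => sq_nonneg _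
      have h1 : (0:ℝ) < 1 + ∑ j, ‖z j‖^2 := by positivity
      rw [aux_gamma n _ h1, ha_def, ← ENNReal.ofReal_mul (hnn2 z),
        ← ENNReal.ofReal_mul (by positivity)]
      congr 1
      ring
    have step2 : (∫⁻ z : Fin r → ℂ, ENNReal.ofReal (‖φ z‖^2) *
        ∫⁻ t in Ioi (0:ℝ), ENNReal.ofReal (t^n * Real.exp (-((1 + ∑ j, ‖z j‖^2) * t)))) =
        ∫⁻ t in Ioi (0:ℝ), ∫⁻ z : Fin r → ℂ, ENNReal.ofReal (‖φ z‖^2) *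
          ENNReal.ofReal (t^n * Real.exp (-((1 + ∑ j, ‖z j‖^2) * t))) := by
      rw [← lintegral_lintegral_swap]
      · refine lintegral_congr fun z => ?_
        rw [← lintegral_const_mul' _ _ ENNReal.ofReal_ne_top]
      · apply Measurable.aemeasurable
        refine Measurable.fun_mul (f := fun p : (Fin r → ℂ) × ℝ => ENNReal.ofReal (‖φ p.1‖^2)) ?_ ?_
        · exact ENNReal.measurable_ofReal.comp
            ((hcont.norm.pow 2).comp continuous_fst).measurable
        · refine ENNReal.measurable_ofReal.comp (Continuous.measurable ?_)
          exact (continuous_snd.pow n).mul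
            (((continuous_const.add (hScont.comp continuous_fst)).mul continuous_snd).neg.rexp)
    have step3 : (∫⁻ t in Ioi (0:ℝ), ∫⁻ z : Fin r → ℂ, ENNReal.ofReal (‖φ z‖^2) *
          ENNReal.ofReal (t^n * Real.exp (-((1 + ∑ j, ‖z j‖^2) * t)))) =
        ∫⁻ t in Ioi (0:ℝ), ENNReal.ofReal (Real.exp (-t)) * B := by
      refine setLIntegral_congr_fun measurableSet_Ioi
        (fun t ht => ?_)
      have ht0 : (0:ℝ) < t := ht
      have inner1 : (∫⁻ z : Fin r → ℂ, ENNReal.ofReal (‖φ z‖^2) *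
          ENNReal.ofReal (t^n * Real.exp (-((1 + ∑ j, ‖z j‖^2) * t)))) =
          ∫⁻ z : Fin r → ℂ, ENNReal.ofReal (t^n * Real.exp (-t)) *
            ENNReal.ofReal (‖φ z‖^2 * Real.exp (-(t * ∑ j, ‖z j‖^2))) := by
        refine lintegral_congr fun z => ?_
        rw [← ENNReal.ofReal_mul (by positivity), ← ENNReal.ofReal_mul (by positivity)]
        congr 1
        have hexp : Real.exp (-((1 + ∑ j, ‖z j‖^2) * t)) =
            Real.exp (-t) * Real.exp (-(t * ∑ j, ‖z j‖^2)) := by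
          rw [← Real.exp_add]
          ring_nf
        rw [hexp]
        ring
      rw [inner1, lintegral_const_mul' _ _ ENNReal.ofReal_ne_top,
        aux_scale r k φ hcont hhom t ht0, ← hB_def, ← hn_def]
      rw [ENNReal.ofReal_mul (by positivity : (0:ℝ) ≤ t^n)]
      rw [show ENNReal.ofReal (t^n) * ENNReal.ofReal (Real.exp (-t)) *
            ((ENNReal.ofReal (t^n))⁻¹ * B) =
          (ENNReal.ofReal (t^n) * (ENNReal.ofReal (t^n))⁻¹) *
            (ENNReal.ofReal (Real.exp (-t)) * B) from by ring]
      rw [ENNReal.mul_inv_cancel (by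
          rw [ne_eq, ENNReal.ofReal_eq_zero, not_le]; positivity) ENNReal.ofReal_ne_top,
        one_mul]
    have step4 : (∫⁻ t in Ioi (0:ℝ), ENNReal.ofReal (Real.exp (-t)) * B) = B := by
      rw [lintegral_mul_const' B _ hBlt.ne, exp_lint, one_mul]
    rw [step1, step2, step3, step4]
  have hJ : J = B * a⁻¹ := by
    calc J = J * (a * a⁻¹) := by rw [ENNReal.mul_inv_cancel ha0 haT, mul_one]
      _ = (J * a) * a⁻¹ := by rw [mul_assoc]
      _ = B * a⁻¹ := by rw [key]
  have hJlt : J < ⊤ := by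
    rw [hJ]
    exact ENNReal.mul_lt_top hBlt (lt_top_iff_ne_top.mpr (ENNReal.inv_ne_top.mpr ha0))
  have hInt2 : Integrable (fun z : Fin r → ℂ =>
      ‖φ z‖ ^ 2 * ((1 + ∑ j, ‖z j‖ ^ 2) ^ (k + r + 1))⁻¹) :=
    ⟨hcont2.aestronglyMeasurable,
      (hasFiniteIntegral_iff_ofReal (Filter.Eventually.of_forall hnn2)).2 hJlt⟩
  refine ⟨hInt1, hInt2, ?_⟩
  rw [integral_eq_lintegral_of_nonneg_ae (Filter.Eventually.of_forall hnn1)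
      hInt1.aestronglyMeasurable,
    integral_eq_lintegral_of_nonneg_ae (Filter.Eventually.of_forall hnn2)
      hInt2.aestronglyMeasurable]
  rw [← hB_def, ← hJ_def, hJ, ENNReal.toReal_mul, ENNReal.toReal_inv, ha_def,
    ENNReal.toReal_ofReal (by positivity)]
  have hfac : ((n.factorial : ℝ)) ≠ 0 := by exact_mod_cast n.factorial_pos.ne'
  field_simp
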